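/- arXiv:2008.03025 — 7 statements merged into one kernel-verified Lean document; each statement's English description precedes it below -/
import Mathlib

section
/- Let n be a positive integer, S a finite set, ξ : S → ℤ_{>0} a function, and (x_s)_{s∈S} a family of elements in a commutative ring. For each divisor d of n define B_d = ∏_{s ∈ S, (n/d) ∣ ξ(s)} (1 + x_s) and A_d = ∑_{k ∣ d} μ(k) · B_{d/k}, where μ is the Möbius function. Then A_d = ∑_{T ⊆ S, gcd(n, ξ(T)) = n/d} ∏_{t ∈ T} x_t, where ξ(T) = gcd{ξ(t) : t ∈ T} and ξ(∅) = 0 (so gcd(n, ξ(∅)) = n). -/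
open Finset

lemma moebius_divisor_sum (e : ℕ) :
    ∑ k ∈ e.divisors, (ArithmeticFunction.moebius k : ℤ) = if e = 1 then 1 else 0 := by
  have h := ArithmeticFunction.coe_mul_zeta_apply
    (f := (ArithmeticFunction.moebius : ArithmeticFunction ℤ)) (x := e)
  rw [ArithmeticFunction.moebius_mul_coe_zeta] at h
  rw [← h, ArithmeticFunction.one_apply]

/-- subset-sum identity for `A_d`: with
`B_e = ∏_{s ∈ S, (n/e) ∣ ξ(s)} (1 + x_s)` and `A_d = ∑_{k ∣ d} μ(k) B_{d/k}`,
one has `A_d = ∑_{T ⊆ S, gcd(n, ξ(T)) = n/d} ∏_{t ∈ T} x_t`. -/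
theorem stmt1 {ι : Type*} [DecidableEq ι] {R : Type*} [CommRing R]
    (n : ℕ) (hn : 0 < n) (S : Finset ι) (ξ : ι → ℕ) (hξ : ∀ s ∈ S, 0 < ξ s)
    (x : ι → R) (d : ℕ) (hd : d ∣ n)
    (B : ℕ → R) (hB : ∀ e, B e = ∏ s ∈ S.filter (fun s => (n / e) ∣ ξ s), (1 + x s)) :
    ∑ k ∈ d.divisors, (ArithmeticFunction.moebius k : ℤ) • B (d / k) =
      ∑ T ∈ S.powerset.filter (fun T => Nat.gcd n (T.gcd ξ) = n / d), ∏ t ∈ T, x t := by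
  classical
  have hdpos : 0 < d := Nat.pos_of_dvd_of_pos hd hn
  -- Expand each B (d/k) as a sum over subsets of S
  have hBexp : ∀ e : ℕ, B e = ∑ T ∈ S.powerset,
      (if (n / e) ∣ T.gcd ξ then ∏ t ∈ T, x t else 0) := by
    intro e
    rw [hB e]
    have h1 : ∀ s : Finset ι, ∏ t ∈ s, (1 + x t) = ∑ T ∈ s.powerset, ∏ t ∈ T, x t := by
      intro s
      simp_rw [add_comm (1 : R)]
      rw [Finset.prod_add]
      simp
    rw [h1]
    have h2 : (S.filter (fun s => (n / e) ∣ ξ s)).powerset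
        = S.powerset.filter (fun T => (n / e) ∣ T.gcd ξ) := by
      ext T
      simp only [mem_powerset, mem_filter, Finset.subset_iff, Finset.dvd_gcd_iff, mem_filter]
      exact ⟨fun h => ⟨fun {a} ha => (h ha).1, fun a ha => (h ha).2⟩,
        fun h {a} ha => ⟨h.1 ha, h.2 a ha⟩⟩
    rw [h2, Finset.sum_filter]
  simp_rw [hBexp, Finset.smul_sum, smul_ite, smul_zero]
  rw [Finset.sum_comm]
  rw [Finset.sum_filter]
  refine Finset.sum_congr rfl fun T hT => ?_
  -- now fix T; compute inner sum
  set g := Nat.gcd n (T.gcd ξ) with hg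
  have hgdvd : g ∣ n := Nat.gcd_dvd_left _ _
  have hgpos : 0 < g := Nat.gcd_pos_of_pos_left _ hn
  set m := n / g with hm
  have hmdvd : m ∣ n := Nat.div_dvd_of_dvd hgdvd
  have hmpos : 0 < m := Nat.div_pos (Nat.le_of_dvd hn hgdvd) hgpos
  -- condition rewriting
  have hcond : ∀ k ∈ d.divisors, ((n / (d / k)) ∣ T.gcd ξ ↔ m ∣ d / k) := by
    intro k hk
    obtain ⟨hkd, -⟩ := Nat.mem_divisors.mp hk
    have hak : (d / k) ∣ n := (Nat.div_dvd_of_dvd hkd).trans hd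
    have hakpos : 0 < d / k := Nat.div_pos (Nat.le_of_dvd hdpos hkd)
      (Nat.pos_of_dvd_of_pos hkd hdpos)
    constructor
    · intro h
      have hdg : (n / (d / k)) ∣ g := Nat.dvd_gcd (Nat.div_dvd_of_dvd hak) h
      rw [Nat.div_dvd_iff_dvd_mul hak hakpos] at hdg
      rw [hm, Nat.div_dvd_iff_dvd_mul hgdvd hgpos]
      rwa [mul_comm]
    · intro h
      have : (n / (d / k)) ∣ g := by
        rw [Nat.div_dvd_iff_dvd_mul hak hakpos]
        rw [hm, Nat.div_dvd_iff_dvd_mul hgdvd hgpos] at h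
        rwa [mul_comm]
      exact this.trans (Nat.gcd_dvd_right _ _)
  have hsum : (∑ k ∈ d.divisors, if (n / (d / k)) ∣ T.gcd ξ
      then (ArithmeticFunction.moebius k : ℤ) • ∏ t ∈ T, x t else 0)
      = (∑ k ∈ d.divisors, if m ∣ d / k then (ArithmeticFunction.moebius k : ℤ) else 0)
        • ∏ t ∈ T, x t := by
    rw [Finset.sum_smul]
    refine Finset.sum_congr rfl fun k hk => ?_
    simp only [hcond k hk]
    split <;> simp
  rw [hsum]
  -- compute the integer sum
  have hkey : (∑ k ∈ d.divisors, if m ∣ d / k then (ArithmeticFunction.moebius k : ℤ) else 0)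
      = if g = n / d then 1 else 0 := by
    rw [← Finset.sum_filter]
    by_cases hmd : m ∣ d
    · have hfe : d.divisors.filter (fun k => m ∣ d / k) = (d / m).divisors := by
        ext k
        simp only [mem_filter, Nat.mem_divisors, hdpos.ne', ne_eq, not_false_eq_true,
          and_true, Nat.ne_of_gt (Nat.div_pos (Nat.le_of_dvd hdpos hmd) hmpos)]
        constructor
        · rintro ⟨hkd, hmk⟩
          rw [Nat.dvd_div_iff_mul_dvd hkd] at hmk
          rw [Nat.dvd_div_iff_mul_dvd hmd]
          rwa [mul_comm] at hmk
        · intro hk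
          have hkd : k ∣ d := hk.trans (Nat.div_dvd_of_dvd hmd)
          refine ⟨hkd, ?_⟩
          rw [Nat.dvd_div_iff_mul_dvd hmd] at hk
          rw [Nat.dvd_div_iff_mul_dvd hkd]
          rwa [mul_comm]
      rw [hfe, moebius_divisor_sum]
      have hiff : d / m = 1 ↔ g = n / d := by
        constructor
        · intro h
          have hdm : d = m := by
            have := Nat.eq_mul_of_div_eq_right hmd h; simpa using this
          rw [hm] at hdm
          rw [hdm, Nat.div_div_self hgdvd hn.ne']
        · intro h
          have : m = d := by rw [hm, h, Nat.div_div_self hd hn.ne']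
          rw [this, Nat.div_self hdpos]
      simp [hiff]
    · have hfe : d.divisors.filter (fun k => m ∣ d / k) = ∅ := by
        ext k
        simp only [mem_filter, Nat.mem_divisors, notMem_empty, iff_false, not_and, and_imp]
        intro hkd _ hmk
        exact hmd (hmk.trans (Nat.div_dvd_of_dvd hkd))
      have hne : ¬ (g = n / d) := by
        intro h
        apply hmd
        rw [hm, h, Nat.div_div_self hd hn.ne']
      simp [hfe, hne]
  rw [hkey]
  split <;> simp
end

section
/- Let n be a positive integer, S a finite set, and ξ : S → ℤ_{>0}. For each s ∈ S let x_s be a nonnegative rational number. Define B_d = ∏_{s ∈ S, (n/d) ∣ ξ(s)} (1 + x_s) for each divisor d of n, and A_d = ∑_{k ∣ d} μ(k) B_{d/k}. Then A_d ≥ 0 for every divisor d of n. -/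
open Finset

private lemma mu_sum_divisors (m : ℕ) :
    ∑ k ∈ m.divisors, (ArithmeticFunction.moebius k : ℤ) = if m = 1 then 1 else 0 := by
  rw [← ArithmeticFunction.coe_mul_zeta_apply, ArithmeticFunction.moebius_mul_coe_zeta,
    ArithmeticFunction.one_apply]

private lemma mu_filter_nonneg (d r : ℕ) (hd : d ≠ 0) :
    0 ≤ ∑ k ∈ d.divisors.filter (· ∣ r), (ArithmeticFunction.moebius k : ℤ) := by
  have h : d.divisors.filter (· ∣ r) = (Nat.gcd d r).divisors := by
    ext k
    simp only [Finset.mem_filter, Nat.mem_divisors, Nat.dvd_gcd_iff, Nat.gcd_eq_zero_iff]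
    have := @Nat.gcd_eq_zero_iff d r
    tauto
  rw [h, mu_sum_divisors]
  split <;> norm_num

/-- nonnegativity of `A_d = ∑_{k ∣ d} μ(k) B_{d/k}` when the `x_s` are
nonnegative rationals, where `B_e = ∏_{s ∈ S, (n/e) ∣ ξ(s)} (1 + x_s)`. -/
theorem stmt2 {ι : Type*} [DecidableEq ι]
    (n : ℕ) (hn : 0 < n) (S : Finset ι) (ξ : ι → ℕ) (hξ : ∀ s ∈ S, 0 < ξ s)
    (x : ι → ℚ) (hx : ∀ s ∈ S, 0 ≤ x s) (d : ℕ) (hd : d ∣ n)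
    (B : ℕ → ℚ) (hB : ∀ e, B e = ∏ s ∈ S.filter (fun s => (n / e) ∣ ξ s), (1 + x s)) :
    0 ≤ ∑ k ∈ d.divisors, (ArithmeticFunction.moebius k : ℤ) • B (d / k) := by
  have hd0 : d ≠ 0 := by
    rintro rfl
    exact absurd (Nat.eq_zero_of_zero_dvd hd) hn.ne'
  have hnd : 0 < n / d := Nat.div_pos (Nat.le_of_dvd hn hd) (Nat.pos_of_ne_zero hd0)
  -- n / (d / k) = k * (n / d) for k ∣ d
  have e1 : ∀ k, k ∣ d → n / (d / k) = k * (n / d) := by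
    rintro k ⟨e, rfl⟩
    obtain ⟨f, hf⟩ := hd
    have hk0 : 0 < k := by
      rcases Nat.eq_zero_or_pos k with h | h
      · exact absurd (by simp [h]) hd0
      · exact h
    have he0 : 0 < e := by
      rcases Nat.eq_zero_or_pos e with h | h
      · exact absurd (by simp [h]) hd0
      · exact h
    rw [Nat.mul_div_cancel_left e hk0, hf, Nat.mul_div_cancel_left f (by positivity),
      show k * e * f = k * f * e by ring, Nat.mul_div_cancel _ he0]
  -- expand B into a sum over subsets
  have key : ∀ k ∈ d.divisors, B (d / k) =
      ∑ t ∈ S.powerset, if (∀ s ∈ t, (n / (d / k)) ∣ ξ s) then ∏ s ∈ t, x s else 0 := by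
    intro k hk
    rw [hB]
    have hpow : (S.filter (fun s => (n / (d / k)) ∣ ξ s)).powerset
        = S.powerset.filter (fun t => ∀ s ∈ t, (n / (d / k)) ∣ ξ s) := by
      ext t
      simp only [Finset.mem_powerset, Finset.mem_filter]
      constructor
      · intro h
        exact ⟨fun a ha => (Finset.mem_filter.mp (h ha)).1,
          fun s hs => (Finset.mem_filter.mp (h hs)).2⟩
      · rintro ⟨h1, h2⟩ a ha
        exact Finset.mem_filter.mpr ⟨h1 ha, h2 a ha⟩
    calc ∏ s ∈ S.filter (fun s => (n / (d / k)) ∣ ξ s), (1 + x s)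
        = ∑ t ∈ (S.filter (fun s => (n / (d / k)) ∣ ξ s)).powerset, ∏ s ∈ t, x s := by
          simp_rw [add_comm (1 : ℚ)]
          rw [Finset.prod_add]
          simp
      _ = _ := by rw [hpow, Finset.sum_filter]
  rw [show (∑ k ∈ d.divisors, (ArithmeticFunction.moebius k : ℤ) • B (d / k))
      = ∑ k ∈ d.divisors, (ArithmeticFunction.moebius k : ℤ) •
        ∑ t ∈ S.powerset, (if (∀ s ∈ t, (n / (d / k)) ∣ ξ s) then ∏ s ∈ t, x s else 0) from
    Finset.sum_congr rfl fun k hk => by rw [key k hk]]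
  simp_rw [Finset.smul_sum]
  rw [Finset.sum_comm]
  apply Finset.sum_nonneg
  intro t ht
  have hP : 0 ≤ ∏ s ∈ t, x s :=
    Finset.prod_nonneg fun s hs => hx s (Finset.mem_powerset.mp ht hs)
  simp_rw [zsmul_eq_mul, mul_ite, mul_zero, ← Finset.sum_filter, ← Finset.sum_mul]
  apply mul_nonneg _ hP
  -- now a pure Möbius sum
  set g := Nat.gcd n (t.gcd ξ) with hg
  have hcond : ∀ k, k ∣ d → ((∀ s ∈ t, (n / (d / k)) ∣ ξ s) ↔ (k * (n / d)) ∣ g) := by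
    intro k hk
    rw [e1 k hk]
    constructor
    · intro h
      refine Nat.dvd_gcd ?_ (Finset.dvd_gcd h)
      calc k * (n / d) ∣ d * (n / d) := mul_dvd_mul_right hk _
        _ = n := Nat.mul_div_cancel' hd
    · intro h s hs
      exact dvd_trans h (dvd_trans (Nat.gcd_dvd_right _ _) (Finset.gcd_dvd hs))
  by_cases hcase : (n / d) ∣ g
  · obtain ⟨r, hr⟩ := hcase
    have hfil : d.divisors.filter (fun k => ∀ s ∈ t, (n / (d / k)) ∣ ξ s)
        = d.divisors.filter (· ∣ r) := by
      apply Finset.filter_congr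
      intro k hk
      rw [hcond k (Nat.mem_divisors.mp hk).1, hr]
      rw [mul_comm k (n / d)]
      exact ⟨fun h => (mul_dvd_mul_iff_left hnd.ne').mp h,
        fun h => mul_dvd_mul_left _ h⟩
    rw [hfil]
    have := mu_filter_nonneg d r hd0
    push_cast
    exact_mod_cast this
  · have hfil : d.divisors.filter (fun k => ∀ s ∈ t, (n / (d / k)) ∣ ξ s) = ∅ := by
      rw [Finset.filter_eq_empty_iff]
      intro k hk hc
      have := (hcond k (Nat.mem_divisors.mp hk).1).mp hc
      exact hcase (dvd_trans (Dvd.intro_left k rfl) this)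
    rw [hfil]
    simp
end

section
/- Let n be a positive integer and for each divisor e of n let a_e be an integer. Define B(q) = ∑_{e ∣ n} a_e · (q^n - 1)/(q^{n/e} - 1) ∈ ℤ[q] (where (q^n-1)/(q^{n/e}-1) = 1 + q^{n/e} + q^{2n/e} + ... + q^{n - n/e}). Then for any divisor d of n, B(q) ≡ ∑_{e ∣ (n/d)} e · a_e (mod Φ_d(q)), where Φ_d is the d-th cyclotomic polynomial. -/
open Polynomial Finset

lemma cyc_dvd_of_dvd {d m : ℕ} (hdm : d ∣ m) : (cyclotomic d ℤ) ∣ X ^ m - 1 := by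
  obtain ⟨k, rfl⟩ := hdm
  calc (cyclotomic d ℤ) ∣ X ^ d - 1 := cyclotomic.dvd_X_pow_sub_one d ℤ
    _ ∣ (X ^ d) ^ k - 1 ^ k := sub_dvd_pow_sub_pow _ _ _
    _ = X ^ (d * k) - 1 := by rw [← pow_mul, one_pow]

lemma cyc_not_dvd {d m : ℕ} (hd : 0 < d) (hm : 0 < m) (hdm : ¬ d ∣ m) :
    ¬ (cyclotomic d ℤ) ∣ X ^ m - 1 := by
  intro h
  rw [← prod_cyclotomic_eq_X_pow_sub_one hm ℤ] at h
  have hprime : Prime (cyclotomic d ℤ) :=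
    (cyclotomic.irreducible hd).prime
  obtain ⟨k, hk, hdvd⟩ := hprime.exists_mem_finset_dvd h
  have hk' := (Nat.mem_divisors.mp hk).1
  have hkpos : 0 < k := Nat.pos_of_dvd_of_pos hk' hm
  have : d = k := cyclotomic_injective <|
    eq_of_monic_of_associated (cyclotomic.monic d ℤ) (cyclotomic.monic k ℤ) <|
      (cyclotomic.irreducible hd).associated_of_dvd (cyclotomic.irreducible hkpos) hdvd
  exact hdm (this ▸ hk')

/-- for `B(q) = ∑_{e ∣ n} a_e (1 + q^{n/e} + ⋯ + q^{n - n/e})` and `d ∣ n`,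
`B(q) ≡ ∑_{e ∣ (n/d)} e · a_e (mod Φ_d(q))` in `ℤ[q]`. -/
theorem stmt3 (n : ℕ) (hn : 0 < n) (a : ℕ → ℤ) (d : ℕ) (hd : d ∣ n) :
    (cyclotomic d ℤ) ∣
      (∑ e ∈ n.divisors, Polynomial.C (a e) * ∑ j ∈ Finset.range e, (X : ℤ[X]) ^ (j * (n / e))) -
        Polynomial.C (∑ e ∈ (n / d).divisors, (e : ℤ) * a e) := by
  have hd0 : 0 < d := Nat.pos_of_dvd_of_pos hd hn
  set c : ℕ → ℤ := fun e => if d ∣ n / e then (e : ℤ) else 0 with hc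
  have hsum : (∑ e ∈ (n / d).divisors, (e : ℤ) * a e) = ∑ e ∈ n.divisors, a e * c e := by
    have hfilter : (n / d).divisors = n.divisors.filter (fun e => d ∣ n / e) := by
      ext e
      simp only [Nat.mem_divisors, Finset.mem_filter]
      constructor
      · rintro ⟨he, h0⟩
        have hen : e ∣ n := he.trans (Nat.div_dvd_of_dvd hd)
        refine ⟨⟨hen, hn.ne'⟩, ?_⟩
        rw [Nat.dvd_div_iff_mul_dvd hen, mul_comm]
        exact (Nat.dvd_div_iff_mul_dvd hd).mp he
      · rintro ⟨⟨hen, _⟩, hde⟩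
        refine ⟨?_, ?_⟩
        · rw [Nat.dvd_div_iff_mul_dvd hd, mul_comm]
          exact (Nat.dvd_div_iff_mul_dvd hen).mp hde
        · exact (Nat.div_ne_zero_iff_of_dvd hd).mpr ⟨hn.ne', fun h => by simp [h] at hd0⟩
    rw [hfilter, Finset.sum_filter]
    exact Finset.sum_congr rfl fun e _ => by
      simp only [hc]; split <;> simp [mul_comm]
  rw [hsum, map_sum]
  rw [← Finset.sum_sub_distrib]
  refine Finset.dvd_sum fun e he => ?_
  obtain ⟨hen, -⟩ := Nat.mem_divisors.mp he
  have he0 : 0 < e := Nat.pos_of_dvd_of_pos hen hn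
  have hm0 : 0 < n / e := Nat.div_pos (Nat.le_of_dvd hn hen) he0
  have : Polynomial.C (a e * c e) = Polynomial.C (a e) * Polynomial.C (c e) := map_mul _ _ _
  rw [this, ← mul_sub]
  refine Dvd.dvd.mul_left ?_ _
  by_cases hcase : d ∣ n / e
  · -- c e = e, and each X^(j*(n/e)) ≡ 1
    simp only [hc, if_pos hcase]
    have : (Polynomial.C (e : ℤ) : ℤ[X]) = ∑ j ∈ Finset.range e, 1 := by
      simp [Polynomial.C_eq_natCast]
    rw [this, ← Finset.sum_sub_distrib]
    refine Finset.dvd_sum fun j _ => ?_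
    exact cyc_dvd_of_dvd (hcase.mul_left j)
  · simp only [hc, if_neg hcase, map_zero, sub_zero]
    have hprime : Prime (cyclotomic d ℤ) := (cyclotomic.irreducible hd0).prime
    have hgeom : (∑ j ∈ Finset.range e, (X : ℤ[X]) ^ (j * (n / e))) * (X ^ (n / e) - 1)
        = X ^ n - 1 := by
      have := geom_sum_mul ((X : ℤ[X]) ^ (n / e)) e
      simp only [← pow_mul] at this
      have h2 : (∑ j ∈ Finset.range e, (X : ℤ[X]) ^ (j * (n / e)))
          = ∑ x ∈ Finset.range e, (X : ℤ[X]) ^ (n / e * x) :=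
        Finset.sum_congr rfl fun j _ => by rw [mul_comm]
      rw [h2, this, Nat.div_mul_cancel hen]
    have hdvd : cyclotomic d ℤ ∣ (∑ j ∈ Finset.range e, (X : ℤ[X]) ^ (j * (n / e))) * (X ^ (n / e) - 1) := by
      rw [hgeom]; exact cyc_dvd_of_dvd hd
    rcases hprime.dvd_mul.mp hdvd with h | h
    · exact h
    · exact absurd h (cyc_not_dvd hd0 hm0 hcase)
end

section
/- Let f(q) = ∑_{d ∣ n} a_d · (q^n - 1)/(q^{n/d} - 1) with nonnegative integers a_d, and let ω be a primitive n-th root of unity. Then for every divisor k of n, ∑_{j ∣ k} μ(k/j) · f(ω^j) = k · a_k. In particular this quantity is nonnegative. -/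
open Polynomial Finset

lemma stmt5_aux (n : ℕ) (hn : 0 < n) (a : ℕ → ℕ) (ω : ℂ) (hω : IsPrimitiveRoot ω n)
    (f : ℂ[X])
    (hf : f = ∑ d ∈ n.divisors, Polynomial.C (a d : ℂ) * ∑ j ∈ Finset.range d, X ^ (j * (n / d)))
    (j : ℕ) (hj : j ∣ n) :
    f.eval (ω ^ j) = ∑ d ∈ j.divisors, (d : ℂ) * (a d : ℂ) := by
  subst hf
  rw [eval_finset_sum]
  have h1 : ∀ d ∈ n.divisors,
      eval (ω ^ j) (C (a d : ℂ) * ∑ i ∈ Finset.range d, X ^ (i * (n / d)))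
        = if d ∣ j then (d : ℂ) * (a d : ℂ) else 0 := by
    intro d hd
    rw [Nat.mem_divisors] at hd
    obtain ⟨hdn, -⟩ := hd
    have hd0 : 0 < d := Nat.pos_of_dvd_of_pos hdn hn
    rw [eval_mul, eval_C, eval_finset_sum]
    simp only [eval_pow, eval_X]
    have key : ∀ i : ℕ, (ω ^ j) ^ (i * (n / d)) = (ω ^ (j * (n / d))) ^ i := by
      intro i; rw [← pow_mul, ← pow_mul]; congr 1; ring
    simp only [key]
    set ζ : ℂ := ω ^ (j * (n / d)) with hζ
    have hζd : ζ ^ d = 1 := by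
      rw [hζ, ← pow_mul]
      have : j * (n / d) * d = j * n := by
        rw [mul_assoc, Nat.div_mul_cancel hdn]
      rw [this, mul_comm, pow_mul, hω.pow_eq_one, one_pow]
    have hζ1 : ζ = 1 ↔ d ∣ j := by
      have hnd : d * (n / d) = n := Nat.mul_div_cancel' hdn
      have hnd0 : 0 < n / d := Nat.div_pos (Nat.le_of_dvd hn hdn) hd0
      have step : n ∣ j * (n / d) ↔ d * (n / d) ∣ j * (n / d) := by rw [hnd]
      rw [hζ, hω.pow_eq_one_iff_dvd, step, Nat.mul_dvd_mul_iff_right hnd0]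
    by_cases hdvd : d ∣ j
    · rw [if_pos hdvd]
      have : ζ = 1 := hζ1.mpr hdvd
      simp [this, mul_comm]
    · rw [if_neg hdvd]
      have hζne : ζ ≠ 1 := fun h => hdvd (hζ1.mp h)
      have : ∑ i ∈ Finset.range d, ζ ^ i = 0 := by
        have := geom_sum_eq hζne d
        rw [this, hζd, sub_self, zero_div]
      rw [this, mul_zero]
  rw [Finset.sum_congr rfl h1, ← Finset.sum_filter,
    Nat.divisors_filter_dvd_of_dvd hn.ne' hj]

/-- for `f(q) = ∑_{d ∣ n} a_d (1 + q^{n/d} + ⋯ + q^{n - n/d})` with `a_d ∈ ℕ`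
and `ω` a primitive `n`-th root of unity, for every divisor `k` of `n` one has
`∑_{j ∣ k} μ(k/j) f(ω^j) = k · a_k`; in particular it is nonnegative. -/
theorem stmt5 (n : ℕ) (hn : 0 < n) (a : ℕ → ℕ) (ω : ℂ) (hω : IsPrimitiveRoot ω n)
    (f : ℂ[X])
    (hf : f = ∑ d ∈ n.divisors, Polynomial.C (a d : ℂ) * ∑ j ∈ Finset.range d, X ^ (j * (n / d)))
    (k : ℕ) (hk : k ∣ n) :
    ∑ j ∈ k.divisors, (ArithmeticFunction.moebius (k / j) : ℂ) * f.eval (ω ^ j)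
      = (k : ℂ) * (a k : ℂ) ∧
    0 ≤ (∑ j ∈ k.divisors, (ArithmeticFunction.moebius (k / j) : ℂ) * f.eval (ω ^ j)).re := by
  have hk0 : 0 < k := Nat.pos_of_dvd_of_pos hk hn
  have hmain : ∑ j ∈ k.divisors, (ArithmeticFunction.moebius (k / j) : ℂ) * f.eval (ω ^ j)
      = (k : ℂ) * (a k : ℂ) := by
    have heval : ∀ j ∈ k.divisors,
        (ArithmeticFunction.moebius (k / j) : ℂ) * f.eval (ω ^ j)
          = (ArithmeticFunction.moebius (k / j) : ℂ) * ∑ d ∈ j.divisors, (d : ℂ) * (a d : ℂ) := by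
      intro j hj
      rw [Nat.mem_divisors] at hj
      rw [stmt5_aux n hn a ω hω f hf j (hj.1.trans hk)]
    rw [Finset.sum_congr rfl heval]
    have hinv := (ArithmeticFunction.sum_eq_iff_sum_smul_moebius_eq
      (R := ℂ) (f := fun m => (m : ℂ) * (a m : ℂ))
      (g := fun m => ∑ d ∈ m.divisors, (d : ℂ) * (a d : ℂ))).mp (fun _ _ => rfl) k hk0
    rw [← hinv, ← Nat.sum_divisorsAntidiagonal'
      (f := fun x y => (ArithmeticFunction.moebius x : ℂ) *
        ∑ d ∈ y.divisors, (d : ℂ) * (a d : ℂ))]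
    apply Finset.sum_congr rfl
    intro x hx
    rw [zsmul_eq_mul]
  refine ⟨hmain, ?_⟩
  rw [hmain]
  have : (k : ℂ) * (a k : ℂ) = ((k * a k : ℕ) : ℂ) := by push_cast; ring
  rw [this, Complex.natCast_re]
  positivity
end

section
/- Let n be a positive integer and B(q) ∈ ℤ[q] a polynomial of degree < n of the form B(q) = ∑_{d ∣ n} a_d · (1 + q^{n/d} + q^{2n/d} + ... + q^{n - n/d}) with rational coefficients a_d. If B(q) has integer coefficients, then every a_d is an integer. -/
open Polynomial Finset

lemma coeff_geom_aux (d m i : ℕ) (hm : 0 < m) :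
    (∑ j ∈ Finset.range d, (X : ℚ[X]) ^ (j * m)).coeff i
      = if m ∣ i ∧ i / m < d then 1 else 0 := by
  rw [Polynomial.finset_sum_coeff]
  simp only [Polynomial.coeff_X_pow]
  split
  · rename_i h
    obtain ⟨hdvd, hlt⟩ := h
    have h : ∀ j, (i = j * m) = (j = i / m) := by
      intro j
      apply propext
      constructor
      · rintro rfl; rw [Nat.mul_div_cancel _ hm]
      · rintro rfl; exact (Nat.div_mul_cancel hdvd).symm
    simp only [h]
    rw [Finset.sum_ite_eq' (Finset.range d) (i / m) (fun _ => (1:ℚ))]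
    simp [hlt]
  · rename_i h
    apply Finset.sum_eq_zero
    intro j hj
    rw [if_neg]
    intro hij
    exact h ⟨hij ▸ dvd_mul_left m j,
      by rw [hij, Nat.mul_div_cancel _ hm]; exact Finset.mem_range.mp hj⟩

/-- if `B(q) = ∑_{d ∣ n} a_d (1 + q^{n/d} + ⋯ + q^{n - n/d})` with rational
coefficients `a_d` has integer coefficients, then every `a_d` (for `d ∣ n`) is an integer. -/
theorem stmt6 (n : ℕ) (hn : 0 < n) (a : ℕ → ℚ)
    (B : ℚ[X])
    (hB : B = ∑ d ∈ n.divisors, Polynomial.C (a d) * ∑ j ∈ Finset.range d, X ^ (j * (n / d)))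
    (hint : ∀ i, ∃ z : ℤ, B.coeff i = (z : ℚ)) :
    ∀ d ∈ n.divisors, ∃ z : ℤ, a d = (z : ℚ) := by
  classical
  -- coefficient formula
  have hcoeff : ∀ i < n, B.coeff i = ∑ d ∈ n.divisors.filter (fun d => n / d ∣ i), a d := by
    intro i hi
    rw [hB, Polynomial.finset_sum_coeff, Finset.sum_filter]
    apply Finset.sum_congr rfl
    intro d hd
    obtain ⟨hdn, hn0⟩ := Nat.mem_divisors.mp hd
    have hd0 : 0 < d := Nat.pos_of_dvd_of_pos hdn hn
    have hm : 0 < n / d := Nat.div_pos (Nat.le_of_dvd hn hdn) hd0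
    rw [Polynomial.coeff_C_mul, coeff_geom_aux d (n/d) i hm]
    have hlt : i / (n / d) < d := by
      rw [Nat.div_lt_iff_lt_mul hm, Nat.mul_div_cancel' hdn]
      exact hi
    by_cases h : n / d ∣ i
    · simp [h, hlt]
    · simp [h]
  -- key: for each divisor e, the coefficient at (n/e % n) is ∑_{e ∣ d} a_d
  have key : ∀ e ∈ n.divisors, B.coeff (n / e % n) =
      ∑ d ∈ n.divisors.filter (fun d => e ∣ d), a d := by
    intro e he
    obtain ⟨hen, _⟩ := Nat.mem_divisors.mp he
    have he0 : 0 < e := Nat.pos_of_dvd_of_pos hen hn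
    rw [hcoeff _ (Nat.mod_lt _ hn)]
    congr 1
    apply Finset.filter_congr
    intro d hd
    obtain ⟨hdn, _⟩ := Nat.mem_divisors.mp hd
    rcases eq_or_lt_of_le (show 1 ≤ e from he0) with h1 | h1
    · simp [← h1, Nat.mod_self]
    · have hne : n / e < n := Nat.div_lt_self hn h1
      rw [Nat.mod_eq_of_lt hne]
      rw [Nat.dvd_div_iff_mul_dvd hen]
      constructor
      · intro h
        have h2 : e ∣ n / (n / d) := (Nat.dvd_div_iff_mul_dvd (Nat.div_dvd_of_dvd hdn)).mpr
          (by rwa [mul_comm] at h)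
        rwa [Nat.div_div_self hdn hn.ne'] at h2
      · intro h
        have h2 : e ∣ n / (n / d) := by rwa [Nat.div_div_self hdn hn.ne']
        have h3 := (Nat.dvd_div_iff_mul_dvd (Nat.div_dvd_of_dvd hdn)).mp h2
        rwa [mul_comm] at h3
  -- downward induction on k with n ≤ e + k
  have main : ∀ k, ∀ e ∈ n.divisors, n ≤ e + k → ∃ z : ℤ, a e = (z : ℚ) := by
    intro k
    induction k with
    | zero =>
      intro e he hle
      have hen := (Nat.mem_divisors.mp he).1
      have heq : e = n := le_antisymm (Nat.le_of_dvd hn hen) (by simpa using hle)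
      subst heq
      obtain ⟨z, hz⟩ := hint (e / e % e)
      refine ⟨z, ?_⟩
      rw [key e he] at hz
      rw [← hz]
      rw [Finset.sum_eq_single e]
      · intro d hd hdne
        obtain ⟨hd1, hd2⟩ := Finset.mem_filter.mp hd
        have hd0 : 0 < d := Nat.pos_of_dvd_of_pos (Nat.mem_divisors.mp hd1).1 hn
        exact absurd (Nat.le_antisymm (Nat.le_of_dvd hn (Nat.mem_divisors.mp hd1).1)
          (Nat.le_of_dvd hd0 hd2)) hdne
      · intro h
        exact absurd (Finset.mem_filter.mpr ⟨he, dvd_rfl⟩) h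
    | succ k ih =>
      intro e he hle
      by_cases hcase : n ≤ e + k
      · exact ih e he hcase
      obtain ⟨z0, hz0⟩ := hint (n / e % n)
      rw [key e he] at hz0
      set s := (n.divisors.filter (fun d => e ∣ d)).erase e with hs
      have hsplit : n.divisors.filter (fun d => e ∣ d) = insert e s := by
        rw [hs, Finset.insert_erase (Finset.mem_filter.mpr ⟨he, dvd_rfl⟩)]
      rw [hsplit, Finset.sum_insert (Finset.notMem_erase _ _)] at hz0
      have hall : ∀ d ∈ s, ∃ z : ℤ, a d = (z : ℚ) := by
        intro d hd
        obtain ⟨hne, hmem⟩ := Finset.mem_erase.mp hd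
        obtain ⟨hdiv, hed⟩ := Finset.mem_filter.mp hmem
        have hlt : e < d := lt_of_le_of_ne (Nat.le_of_dvd
          (Nat.pos_of_dvd_of_pos (Nat.mem_divisors.mp hdiv).1 hn) hed) (Ne.symm hne)
        exact ih d hdiv (by omega)
      choose f hf using hall
      refine ⟨z0 - ∑ d ∈ s.attach, f d d.2, ?_⟩
      have hw : ∑ d ∈ s, a d = ((∑ d ∈ s.attach, f d d.2 : ℤ) : ℚ) := by
        rw [← Finset.sum_attach s a]
        push_cast
        exact Finset.sum_congr rfl fun d _ => hf d d.2
      push_cast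
      rw [← hz0, hw]
      push_cast
      ring
  intro d hd
  exact main n d hd (by omega)
end

section
/- Let p be a prime with p ≥ m and let λ be a partition with at most m parts. Then the p-th cyclotomic polynomial Φ_p(q) divides s_λ(1, q, q², ..., q^{m-1}) in ℤ[q] if and only if there exist indices 1 ≤ i < j ≤ m with λ_i - i ≡ λ_j - j (mod p). -/
open Finset Polynomial

/-- let `p ≥ m` be prime and `λ` (0-indexed `lam`) a partition with at most
`m` parts.  If `S ∈ ℤ[q]` is the principal specialization `s_λ(1,q,…,q^{m-1})`, given by
`S = q^{κ(λ)} ∏_{1≤i<j≤m} (1-q^{(λ_i-i)-(λ_j-j)})/(1-q^{j-i})` as rational functions,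
then `Φ_p(q) ∣ S` in `ℤ[q]` if and only if `λ_i - i ≡ λ_j - j (mod p)` for some
`1 ≤ i < j ≤ m`. -/
theorem stmt8 (p m : ℕ) (hp : p.Prime) (hm : m ≤ p) (lam : ℕ → ℕ)
    (hanti : ∀ i j, i ≤ j → lam j ≤ lam i) (hlen : ∀ k, m ≤ k → lam k = 0)
    (S : Polynomial ℤ)
    (hS : algebraMap (Polynomial ℚ) (RatFunc ℚ) (S.map (algebraMap ℤ ℚ)) =
      RatFunc.X ^ (∑ k ∈ Finset.range m, k * lam k) *
        ∏ q ∈ (Finset.range m ×ˢ Finset.range m).filter (fun q => q.1 < q.2),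
          (1 - RatFunc.X ^ (lam q.1 + q.2 - (lam q.2 + q.1))) /
            (1 - RatFunc.X ^ (q.2 - q.1))) :
    (cyclotomic p ℤ ∣ S) ↔
      ∃ i j, i < j ∧ j < m ∧ (lam i + j) ≡ (lam j + i) [MOD p] := by
  have hp0 : 0 < p := hp.pos
  set T := (Finset.range m ×ˢ Finset.range m).filter (fun q : ℕ × ℕ => q.1 < q.2) with hT
  have hmemT : ∀ q : ℕ × ℕ, q ∈ T → q.1 < q.2 ∧ q.2 < m := by
    intro q hq
    simp only [hT, Finset.mem_filter, Finset.mem_product, Finset.mem_range] at hq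
    exact ⟨hq.2, hq.1.2⟩
  set κ := ∑ k ∈ Finset.range m, k * lam k with hκ
  set A : Polynomial ℚ := ∏ q ∈ T, (1 - Polynomial.X ^ (q.2 - q.1)) with hA
  set B : Polynomial ℚ := Polynomial.X ^ κ *
      ∏ q ∈ T, (1 - Polynomial.X ^ (lam q.1 + q.2 - (lam q.2 + q.1))) with hB
  have hmap : ∀ n : ℕ, algebraMap (Polynomial ℚ) (RatFunc ℚ) (1 - Polynomial.X ^ n) =
      1 - RatFunc.X ^ n := by
    intro n; rw [map_sub, map_one, map_pow, RatFunc.algebraMap_X]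
  have hb : ∀ q ∈ T, (1 : RatFunc ℚ) - RatFunc.X ^ (q.2 - q.1) ≠ 0 := by
    intro q hq
    rw [← hmap]
    apply RatFunc.algebraMap_ne_zero
    intro h
    have := congrArg (Polynomial.eval (0 : ℚ)) h
    have h1 : q.2 - q.1 ≠ 0 := Nat.sub_ne_zero_of_lt (hmemT q hq).1
    simp [zero_pow h1] at this
  -- polynomial identity
  have hid : S.map (algebraMap ℤ ℚ) * A = B := by
    apply RatFunc.algebraMap_injective
    have hAeq : algebraMap (Polynomial ℚ) (RatFunc ℚ) A =
        ∏ q ∈ T, ((1 : RatFunc ℚ) - RatFunc.X ^ (q.2 - q.1)) := by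
      rw [hA, map_prod]; exact Finset.prod_congr rfl fun q _ => hmap _
    have hBeq : algebraMap (Polynomial ℚ) (RatFunc ℚ) B =
        RatFunc.X ^ κ *
          ∏ q ∈ T, ((1 : RatFunc ℚ) - RatFunc.X ^ (lam q.1 + q.2 - (lam q.2 + q.1))) := by
      rw [hB, map_mul, map_pow, RatFunc.algebraMap_X, map_prod]
      exact congrArg _ (Finset.prod_congr rfl fun q _ => hmap _)
    rw [map_mul, hS, hAeq, hBeq, mul_assoc, Finset.prod_div_distrib,
      div_mul_cancel₀ _ (Finset.prod_ne_zero_iff.mpr hb)]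
  -- primitive root
  obtain ⟨ζ, hζ⟩ : ∃ ζ : ℂ, IsPrimitiveRoot ζ p :=
    ⟨_, Complex.isPrimitiveRoot_exp p hp0.ne'⟩
  have hζ0 : ζ ≠ 0 := hζ.ne_zero hp0.ne'
  have hdvd1 : cyclotomic p ℤ ∣ S ↔ cyclotomic p ℚ ∣ S.map (algebraMap ℤ ℚ) := by
    rw [algebraMap_int_eq, ← map_cyclotomic p (Int.castRingHom ℚ)]
    exact (map_dvd_map (Int.castRingHom ℚ) Int.cast_injective (cyclotomic.monic p ℤ)).symm
  have hdvd2 : cyclotomic p ℚ ∣ S.map (algebraMap ℤ ℚ) ↔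
      Polynomial.aeval ζ (S.map (algebraMap ℤ ℚ)) = 0 := by
    rw [cyclotomic_eq_minpoly_rat hζ hp0]; exact minpoly.dvd_iff
  -- evaluate the identity at ζ
  have heval := congrArg (Polynomial.aeval ζ) hid
  simp only [hA, hB, map_mul, map_prod, map_sub, map_one, map_pow, Polynomial.aeval_X] at heval
  have hbz : ∀ q ∈ T, (1 : ℂ) - ζ ^ (q.2 - q.1) ≠ 0 := by
    intro q hq
    have h1 : 0 < q.2 - q.1 := Nat.sub_pos_of_lt (hmemT q hq).1
    have h2 : q.2 - q.1 < p := lt_of_le_of_lt (Nat.sub_le _ _) (lt_of_lt_of_le (hmemT q hq).2 hm)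
    exact sub_ne_zero_of_ne (hζ.pow_ne_one_of_pos_of_lt h1.ne' h2).symm
  have hPz : ∏ q ∈ T, ((1 : ℂ) - ζ ^ (q.2 - q.1)) ≠ 0 := Finset.prod_ne_zero_iff.mpr hbz
  have hkey : Polynomial.aeval ζ (S.map (algebraMap ℤ ℚ)) = 0 ↔
      ∃ q ∈ T, (1 : ℂ) - ζ ^ (lam q.1 + q.2 - (lam q.2 + q.1)) = 0 := by
    constructor
    · intro h
      rw [h, zero_mul] at heval
      rcases mul_eq_zero.mp heval.symm with h' | h'
      · exact absurd h' (pow_ne_zero _ hζ0)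
      · exact Finset.prod_eq_zero_iff.mp h'
    · intro ⟨q, hq, hq0⟩
      have : ζ ^ κ * ∏ q ∈ T, ((1 : ℂ) - ζ ^ (lam q.1 + q.2 - (lam q.2 + q.1))) = 0 := by
        rw [Finset.prod_eq_zero hq hq0, mul_zero]
      rw [← heval] at this
      exact (mul_eq_zero.mp this).resolve_right hPz
  rw [hdvd1, hdvd2, hkey]
  constructor
  · rintro ⟨q, hq, hq0⟩
    obtain ⟨h12, h2m⟩ := hmemT q hq
    refine ⟨q.1, q.2, h12, h2m, ?_⟩
    have hle : lam q.2 + q.1 ≤ lam q.1 + q.2 := Nat.add_le_add (hanti q.1 q.2 h12.le) h12.le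
    have : ζ ^ (lam q.1 + q.2 - (lam q.2 + q.1)) = 1 := by
      have := sub_eq_zero.mp hq0; exact this.symm
    exact ((Nat.modEq_iff_dvd' hle).mpr ((hζ.pow_eq_one_iff_dvd _).mp this)).symm
  · rintro ⟨i, j, hij, hjm, hmod⟩
    have hle : lam j + i ≤ lam i + j := Nat.add_le_add (hanti i j hij.le) hij.le
    refine ⟨(i, j), ?_, ?_⟩
    · simp only [hT, Finset.mem_filter, Finset.mem_product, Finset.mem_range]
      exact ⟨⟨lt_trans hij hjm, hjm⟩, hij⟩
    · rw [sub_eq_zero]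
      exact ((hζ.pow_eq_one_iff_dvd _).mpr ((Nat.modEq_iff_dvd' hle).mp hmod.symm)).symm
end

section
/- Suppose λ and μ are partitions of the same positive integer. Then the Kostka number K_{λμ} (the number of semistandard Young tableaux of shape λ and content μ) is positive if and only if λ dominates μ in the dominance order (i.e., λ_1 + ... + λ_k ≥ μ_1 + ... + μ_k for all k). -/
open Finset

namespace Stmt9Aux

/-- Sub-Young-diagram cut out by an antitone row-length bound. -/
def subDiagram (D : YoungDiagram) (f : ℕ → ℕ) (hf : ∀ i, f i ≤ D.rowLen i)
    (hanti : ∀ i j, i ≤ j → f j ≤ f i) : YoungDiagram where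
  cells := D.cells.filter (fun c => c.2 < f c.1)
  isLowerSet := by
    rintro ⟨i1, j1⟩ ⟨i2, j2⟩ ⟨hi, hj⟩ hm
    simp only [Finset.coe_filter, Set.mem_setOf_eq, YoungDiagram.mem_cells] at *
    exact ⟨D.up_left_mem hi hj hm.1,
      lt_of_le_of_lt hj (lt_of_lt_of_le hm.2 (hanti _ _ hi))⟩

theorem mem_subDiagram (D : YoungDiagram) (f : ℕ → ℕ) (hf : ∀ i, f i ≤ D.rowLen i)
    (hanti : ∀ i j, i ≤ j → f j ≤ f i) (i j : ℕ) :
    (i, j) ∈ subDiagram D f hf hanti ↔ j < f i := by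
  show (i, j) ∈ (subDiagram D f hf hanti).cells ↔ _
  simp only [subDiagram, Finset.mem_filter, YoungDiagram.mem_cells]
  constructor
  · rintro ⟨-, h⟩; exact h
  · intro h
    exact ⟨YoungDiagram.mem_iff_lt_rowLen.2 (lt_of_lt_of_le h (hf i)), h⟩

theorem rowLen_subDiagram (D : YoungDiagram) (f : ℕ → ℕ) (hf : ∀ i, f i ≤ D.rowLen i)
    (hanti : ∀ i j, i ≤ j → f j ≤ f i) (i : ℕ) :
    (subDiagram D f hf hanti).rowLen i = f i := by
  have h := fun j => (YoungDiagram.mem_iff_lt_rowLen (μ := subDiagram D f hf hanti)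
      (i := i) (j := j)).symm.trans (mem_subDiagram D f hf hanti i j)
  have h1 := h ((subDiagram D f hf hanti).rowLen i)
  have h2 := h (f i)
  omega

theorem subDiagram_cells_subset (D : YoungDiagram) (f : ℕ → ℕ) (hf : ∀ i, f i ≤ D.rowLen i)
    (hanti : ∀ i j, i ≤ j → f j ≤ f i) :
    (subDiagram D f hf hanti).cells ⊆ D.cells := Finset.filter_subset _ _

theorem card_filter_row_lt (D : YoungDiagram) (k : ℕ) :
    (D.cells.filter (fun c => c.1 < k)).card = ∑ i ∈ Finset.range k, D.rowLen i := by
  have : D.cells.filter (fun c => c.1 < k) =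
      (Finset.range k).biUnion (fun i => D.row i) := by
    ext ⟨i, j⟩
    simp only [Finset.mem_filter, Finset.mem_biUnion, Finset.mem_range,
      YoungDiagram.mem_row_iff, YoungDiagram.mem_cells]
    constructor
    · rintro ⟨hm, hi⟩; exact ⟨i, hi, hm, rfl⟩
    · rintro ⟨i', hi', hm, rfl⟩; exact ⟨hm, hi'⟩
  rw [this, Finset.card_biUnion]
  · exact Finset.sum_congr rfl fun i _ => (D.rowLen_eq_card (i := i)).symm
  · intro x _ y _ hxy
    simp only [Finset.disjoint_left]
    intro c hc hc'
    rw [YoungDiagram.mem_row_iff] at hc hc'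
    exact hxy (hc.2 ▸ hc'.2 ▸ rfl)

theorem rowLen_eq_zero_of_card_le (D : YoungDiagram) {i : ℕ} (h : D.card ≤ i) :
    D.rowLen i = 0 := by
  by_contra hne
  have hmem : (i, 0) ∈ D := YoungDiagram.mem_iff_lt_rowLen.2 (Nat.pos_of_ne_zero hne)
  have hsub : (Finset.range (i + 1)).image (fun t => (t, 0)) ⊆ D.cells := by
    intro c hc
    simp only [Finset.mem_image, Finset.mem_range] at hc
    obtain ⟨t, ht, rfl⟩ := hc
    rw [YoungDiagram.mem_cells]
    exact D.up_left_mem (by omega) le_rfl hmem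
  have hcard := Finset.card_le_card hsub
  rw [Finset.card_image_of_injective _ (fun a b hab => by simpa using hab),
    Finset.card_range] at hcard
  have : D.card = D.cells.card := rfl
  omega

theorem card_eq_sum_rowLen (D : YoungDiagram) (N : ℕ) (h : ∀ i, N ≤ i → D.rowLen i = 0) :
    D.card = ∑ i ∈ Finset.range N, D.rowLen i := by
  rw [← card_filter_row_lt]
  show D.cells.card = _
  congr 1
  rw [eq_comm, Finset.filter_eq_self]
  intro c hc
  by_contra hlt
  push_neg at hlt
  have h0 := h c.1 hlt
  rw [YoungDiagram.mem_cells] at hc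
  have : c.2 < D.rowLen c.1 := YoungDiagram.mem_iff_lt_rowLen.1 (by rwa [Prod.mk.eta])
  omega

theorem row_le_entry {D : YoungDiagram} (T : SemistandardYoungTableau D) :
    ∀ i j, (i, j) ∈ D → i ≤ T i j := by
  intro i
  induction i with
  | zero => intro j _; exact Nat.zero_le _
  | succ n ih =>
    intro j hmem
    have h1 : (n, j) ∈ D := D.up_left_mem (Nat.le_succ n) le_rfl hmem
    have h2 := T.col_strict (Nat.lt_succ_self n) hmem
    have h3 := ih j h1
    exact Nat.lt_of_le_of_lt h3 h2

end Stmt9Aux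


namespace Stmt9Aux

theorem sumH (g : ℕ → ℕ) (a : ℕ) (hg : ∀ i, g (i + 1) ≤ g i) (N : ℕ) :
    ∑ i ∈ Finset.range N, ((g i - a) + min a (g (i + 1))) + min a (g 0) =
      ∑ i ∈ Finset.range N, g i + min a (g N) := by
  induction N with
  | zero => simp
  | succ n ihn =>
    rw [Finset.sum_range_succ, Finset.sum_range_succ (f := g)]
    have := hg n
    omega

end Stmt9Aux

namespace Stmt9Aux2
open Stmt9Aux

theorem build : ∀ (m : ℕ) (D : YoungDiagram) (μ : ℕ → ℕ),
    (∀ i j, i ≤ j → μ j ≤ μ i) →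
    (∀ k, m ≤ k → μ k = 0) →
    (∑ i ∈ Finset.range m, μ i = D.card) →
    (∀ k, ∑ i ∈ Finset.range k, μ i ≤ ∑ i ∈ Finset.range k, D.rowLen i) →
    ∃ T : SemistandardYoungTableau D,
      (∀ k, (D.cells.filter (fun c => T c.1 c.2 = k)).card = μ k) ∧
      (∀ i j, (i, j) ∈ D → T i j < m) := by
  intro m
  induction m with
  | zero =>
    intro D μ hanti hsupp hsum hdom
    have hD : D.cells = ∅ := Finset.card_eq_zero.1 (by simpa using hsum.symm)
    have hno : ∀ i j, (i, j) ∉ D := by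
      intro i j h
      rw [← YoungDiagram.mem_cells, hD] at h
      exact absurd h (Finset.notMem_empty _)
    refine ⟨⟨fun _ _ => 0, ?_, ?_, ?_⟩, ?_, ?_⟩
    · intro i j1 j2 _ h; exact absurd h (hno _ _)
    · intro i1 i2 j _ h; exact absurd h (hno _ _)
    · intro _ _ _; rfl
    · intro k; rw [hD]; simpa using (hsupp k (Nat.zero_le k)).symm
    · intro i j h; exact absurd h (hno _ _)
  | succ m ih =>
    intro D μ hanti hsupp hsum hdom
    by_cases ha0 : μ m = 0
    · have h1 : ∀ k, m ≤ k → μ k = 0 := by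
        intro k hk
        rcases eq_or_lt_of_le hk with rfl | h
        · exact ha0
        · exact hsupp k h
      have h2 : ∑ i ∈ Finset.range m, μ i = D.card := by
        rw [Finset.sum_range_succ, ha0, add_zero] at hsum; exact hsum
      obtain ⟨T, hc, hb⟩ := ih D μ hanti h1 h2 hdom
      exact ⟨T, hc, fun i j h => Nat.lt_succ_of_lt (hb i j h)⟩
    · set a := μ m with ha
      have hlam_anti : ∀ i, D.rowLen (i + 1) ≤ D.rowLen i :=
        fun i => D.rowLen_anti i (i + 1) (Nat.le_succ i)
      have ha_le : a ≤ D.rowLen 0 := by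
        have h1 := hdom 1
        rw [Finset.sum_range_one, Finset.sum_range_one] at h1
        exact le_trans (hanti 0 m (Nat.zero_le m)) h1
      set f : ℕ → ℕ := fun i => (D.rowLen i - a) + min a (D.rowLen (i + 1)) with hf
      have hfle : ∀ i, f i ≤ D.rowLen i := by
        intro i; have := hlam_anti i; simp only [hf]; omega
      have hlam_succ_le_f : ∀ i, D.rowLen (i + 1) ≤ f i := by
        intro i; have := hlam_anti i; simp only [hf]; omega
      have hfanti : ∀ i j, i ≤ j → f j ≤ f i := by
        intro i j hij
        exact antitone_nat_of_succ_le (fun n => le_trans (hfle (n + 1)) (hlam_succ_le_f n)) hij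
      set D' := subDiagram D f hfle hfanti with hD'
      have hrow' : ∀ i, D'.rowLen i = f i := rowLen_subDiagram D f hfle hfanti
      have hmem' : ∀ i j, (i, j) ∈ D' ↔ j < f i := mem_subDiagram D f hfle hfanti
      have hsubset : D'.cells ⊆ D.cells := subDiagram_cells_subset D f hfle hfanti
      have hsumf : ∀ N, ∑ i ∈ Finset.range N, f i + a =
          ∑ i ∈ Finset.range N, D.rowLen i + min a (D.rowLen N) := by
        intro N
        have h := sumH D.rowLen a hlam_anti N
        rw [min_eq_left ha_le] at h
        exact h
      have hrow0 : ∀ i, D.card ≤ i → D.rowLen i = 0 := fun i hi =>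
        rowLen_eq_zero_of_card_le D hi
      have hcard' : D'.card + a = D.card := by
        have e1 : D'.card = ∑ i ∈ Finset.range D.card, f i := by
          rw [card_eq_sum_rowLen D' D.card
            (fun i hi => by rw [hrow' i]; exact Nat.le_zero.1 ((hfle i).trans (hrow0 i hi).le))]
          exact Finset.sum_congr rfl fun i _ => hrow' i
        have e2 : D.card = ∑ i ∈ Finset.range D.card, D.rowLen i :=
          card_eq_sum_rowLen D D.card hrow0
        have e3 := hsumf D.card
        rw [hrow0 D.card le_rfl] at e3
        omega
      have hBm : ∑ i ∈ Finset.range m, μ i + a = D.card := by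
        rw [← hsum, Finset.sum_range_succ]
      set μ' : ℕ → ℕ := fun k => if k < m then μ k else 0 with hμ'
      have hanti' : ∀ i j, i ≤ j → μ' j ≤ μ' i := by
        intro i j hij
        simp only [hμ']
        split_ifs with h1 h2 h2
        · exact hanti i j hij
        · omega
        · exact Nat.zero_le _
        · exact Nat.zero_le _
      have hsupp' : ∀ k, m ≤ k → μ' k = 0 := by
        intro k hk; simp only [hμ', if_neg (not_lt.2 hk)]
      have hμ'eq : ∀ N, N ≤ m → ∑ i ∈ Finset.range N, μ' i = ∑ i ∈ Finset.range N, μ i := by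
        intro N hN
        refine Finset.sum_congr rfl fun i hi => ?_
        rw [Finset.mem_range] at hi
        have him : i < m := lt_of_lt_of_le hi hN
        simp only [hμ']
        rw [if_pos him]
      have hsum' : ∑ i ∈ Finset.range m, μ' i = D'.card := by
        rw [hμ'eq m le_rfl]; omega
      have hdom' : ∀ k, ∑ i ∈ Finset.range k, μ' i ≤ ∑ i ∈ Finset.range k, D'.rowLen i := by
        intro k
        have hgoal : ∑ i ∈ Finset.range k, D'.rowLen i = ∑ i ∈ Finset.range k, f i :=
          Finset.sum_congr rfl fun i _ => hrow' i
        rw [hgoal]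
        have hH := hsumf k
        have hC : ∑ i ∈ Finset.range k, μ' i + a ≤
            ∑ i ∈ Finset.range k, D.rowLen i + min a (D.rowLen k) := by
          rcases le_or_gt k m with hk | hk
          · rw [hμ'eq k hk]
            rcases le_or_gt a (D.rowLen k) with h | h
            · have := hdom k; omega
            · have h1 := hdom (k + 1)
              rw [Finset.sum_range_succ, Finset.sum_range_succ] at h1
              have h2 : a ≤ μ k := hanti k m hk
              omega
          · have e1 : ∑ i ∈ Finset.range k, μ' i = ∑ i ∈ Finset.range m, μ' i := by
              refine (Finset.sum_subset (Finset.range_subset_range.2 hk.le) ?_).symm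
              intro x _ hx
              rw [Finset.mem_range, not_lt] at hx
              exact hsupp' x hx
            rw [e1, hμ'eq m le_rfl]
            have h1 := hdom (m + 1)
            rw [Finset.sum_range_succ] at h1
            have h2 : ∑ i ∈ Finset.range (m + 1), D.rowLen i ≤
                ∑ i ∈ Finset.range k, D.rowLen i :=
              Finset.sum_le_sum_of_subset (Finset.range_subset_range.2 hk)
            omega
        omega
      obtain ⟨T', hc', hb'⟩ := ih D' μ' hanti' hsupp' hsum' hdom'
      set e : ℕ → ℕ → ℕ := fun i j =>
        if (i, j) ∈ D'.cells then T' i j else if (i, j) ∈ D.cells then m else 0 with he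
      have heD' : ∀ i j, (i, j) ∈ D' → e i j = T' i j := by
        intro i j h
        simp only [he, if_pos ((YoungDiagram.mem_cells (i, j)).2 h)]
      have heD : ∀ i j, (i, j) ∉ D' → (i, j) ∈ D → e i j = m := by
        intro i j h1 h2
        simp only [he]
        rw [if_neg (fun hc => h1 ((YoungDiagram.mem_cells (i, j)).1 hc)),
          if_pos ((YoungDiagram.mem_cells (i, j)).2 h2)]
      have hele : ∀ i j, (i, j) ∈ D → e i j ≤ m := by
        intro i j hij
        by_cases h : (i, j) ∈ D'
        · rw [heD' i j h]; exact (hb' i j h).le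
        · rw [heD i j h hij]
      refine ⟨⟨e, ?_, ?_, ?_⟩, ?_, ?_⟩
      · -- row_weak'
        intro i j1 j2 hj hcell
        by_cases h2 : (i, j2) ∈ D'
        · have h1 : (i, j1) ∈ D' := (hmem' i j1).2 (lt_trans hj ((hmem' i j2).1 h2))
          rw [heD' i j1 h1, heD' i j2 h2]
          exact T'.row_weak hj h2
        · rw [heD i j2 h2 hcell]
          exact hele i j1 (D.up_left_mem le_rfl hj.le hcell)
      · -- col_strict'
        intro i1 i2 j hi hcell
        by_cases h2 : (i2, j) ∈ D'
        · have h1 : (i1, j) ∈ D' :=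
            (hmem' i1 j).2 (lt_of_lt_of_le ((hmem' i2 j).1 h2) (hfanti i1 i2 hi.le))
          rw [heD' i1 j h1, heD' i2 j h2]
          exact T'.col_strict hi h2
        · rw [heD i2 j h2 hcell]
          have hj2 : j < D.rowLen i2 := YoungDiagram.mem_iff_lt_rowLen.1 hcell
          have h1 : (i1, j) ∈ D' := by
            refine (hmem' i1 j).2 ?_
            have e1 : D.rowLen i2 ≤ f (i2 - 1) := by
              have := hlam_succ_le_f (i2 - 1)
              have : i2 - 1 + 1 = i2 := by omega
              rw [← this]
              exact hlam_succ_le_f (i2 - 1)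
            exact lt_of_lt_of_le hj2 (e1.trans (hfanti i1 (i2 - 1) (by omega)))
          rw [heD' i1 j h1]
          exact hb' i1 j h1
      · -- zeros'
        intro i j hn
        have h1 : (i, j) ∉ D' := by
          intro h
          exact hn (YoungDiagram.mem_iff_lt_rowLen.2 (lt_of_lt_of_le ((hmem' i j).1 h) (hfle i)))
        simp only [he]
        rw [if_neg (fun hc => h1 ((YoungDiagram.mem_cells (i, j)).1 hc)),
          if_neg (fun hc => hn ((YoungDiagram.mem_cells (i, j)).1 hc))]
      · -- counts
        intro k
        show (D.cells.filter (fun c => e c.1 c.2 = k)).card = μ k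
        have hmc1 : ∀ c : ℕ × ℕ, c ∈ D'.cells → (c.1, c.2) ∈ D' := by
          intro c hc; rw [Prod.mk.eta]; exact hc
        have hmc2 : ∀ c : ℕ × ℕ, c ∉ D'.cells → (c.1, c.2) ∉ D' := by
          intro c hc h; apply hc; rw [Prod.mk.eta] at h; exact h
        have hmc3 : ∀ c : ℕ × ℕ, c ∈ D.cells → (c.1, c.2) ∈ D := by
          intro c hc; rw [Prod.mk.eta]; exact hc
        have hsplit : D.cells = D'.cells ∪ (D.cells \ D'.cells) :=
          (Finset.union_sdiff_of_subset hsubset).symm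
        rw [hsplit, Finset.filter_union, Finset.card_union_of_disjoint
          (Finset.disjoint_filter_filter Finset.sdiff_disjoint.symm)]
        have hpart1 : (D'.cells.filter (fun c => e c.1 c.2 = k)).card = μ' k := by
          rw [← hc' k]
          congr 1
          refine Finset.filter_congr fun c hc => ?_
          rw [heD' c.1 c.2 (hmc1 c hc)]
        have hμ'k : μ' k = if k < m then μ k else 0 := rfl
        by_cases hk : k = m
        · subst hk
          have hpart2 : ((D.cells \ D'.cells).filter (fun c => e c.1 c.2 = k)) =
              D.cells \ D'.cells := by
            rw [Finset.filter_eq_self]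
            intro c hc
            rw [Finset.mem_sdiff] at hc
            rw [heD c.1 c.2 (hmc2 c hc.2) (hmc3 c hc.1)]
          rw [hpart1, hpart2, Finset.card_sdiff_of_subset hsubset]
          have h0 : μ' k = 0 := hsupp' k le_rfl
          have hc2 : D'.cells.card ≤ D.cells.card := Finset.card_le_card hsubset
          have e1 : D.cells.card = D.card := rfl
          have e2 : D'.cells.card = D'.card := rfl
          omega
        · have hpart2 : ((D.cells \ D'.cells).filter (fun c => e c.1 c.2 = k)) = ∅ := by
            rw [Finset.filter_eq_empty_iff]
            intro c hc
            rw [Finset.mem_sdiff] at hc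
            rw [heD c.1 c.2 (hmc2 c hc.2) (hmc3 c hc.1)]
            omega
          rw [hpart1, hpart2, Finset.card_empty, add_zero, hμ'k]
          by_cases hkm : k < m
          · rw [if_pos hkm]
          · rw [if_neg hkm]
            exact (hsupp k (by omega)).symm
      · -- bound
        intro i j hij
        exact Nat.lt_succ_of_le (hele i j hij)

end Stmt9Aux2



open Stmt9Aux Stmt9Aux2 in
/-- Kostka positivity: for partitions `λ` (given as a Young diagram `D`) and
`μ` of the same positive integer, there exists a semistandard Young tableau of shape `λ` and
content `μ` (with letters `0, 1, 2, …`, letter `k` occurring `μ k` times) if and only if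
`λ` dominates `μ`. -/
theorem stmt9 (D : YoungDiagram) (μ : ℕ → ℕ)
    (hμanti : ∀ i j, i ≤ j → μ j ≤ μ i) (hμfin : ∀ i, D.card ≤ i → μ i = 0)
    (hsum : ∑ i ∈ Finset.range D.card, μ i = D.card) (hpos : 0 < D.card) :
    (∃ T : SemistandardYoungTableau D,
        ∀ k, (D.cells.filter (fun c => T c.1 c.2 = k)).card = μ k) ↔
      ∀ k, ∑ i ∈ Finset.range k, μ i ≤ ∑ i ∈ Finset.range k, D.rowLen i := by
  constructor
  · rintro ⟨T, hT⟩ k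
    have hsum2 : ∑ i ∈ Finset.range k, μ i =
        ((Finset.range k).biUnion
          (fun v => D.cells.filter (fun c => T c.1 c.2 = v))).card := by
      rw [Finset.card_biUnion]
      · exact Finset.sum_congr rfl fun v _ => (hT v).symm
      · intro x _ y _ hxy
        simp only [Finset.disjoint_left, Finset.mem_filter]
        rintro c ⟨-, hx⟩ ⟨-, hy⟩
        exact hxy (hx ▸ hy ▸ rfl)
    rw [hsum2, ← card_filter_row_lt]
    apply Finset.card_le_card
    intro c hc
    simp only [Finset.mem_biUnion, Finset.mem_range, Finset.mem_filter] at hc ⊢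
    obtain ⟨v, hv, hcell, hTv⟩ := hc
    refine ⟨hcell, ?_⟩
    have h1 : (c.1, c.2) ∈ D := by rw [Prod.mk.eta]; exact hcell
    have h2 := row_le_entry T c.1 c.2 h1
    omega
  · intro hdom
    obtain ⟨T, hc, -⟩ := build D.card D μ hμanti hμfin hsum hdom
    exact ⟨T, hc⟩
end
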